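/- Let μ ∈ N and suppose Ric^{ac}_μ = c·I + D for some c ∈ ℝ and D ∈ Der(μ). Then tr((Ric^{ac}_μ)²) = c · tr(Ric_μ) = −(1/4) c ‖μ‖². In particular, if μ ≠ 0 then c = tr((Ric^{ac}_μ)²)/tr(Ric_μ), i.e. the soliton constant equals the square norm of the invariant Ricci tensor divided by the scalar curvature. -/
import Mathlib


open scoped BigOperators
open Matrix

noncomputable section

/-- vectors in `ℝ^m`. -/
abbrev Vec (m : ℕ) := Fin m → ℝ

/-- bilinear-map candidates `ℝ^m × ℝ^m → ℝ^m`. -/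
abbrev Bil (m : ℕ) := Vec m → Vec m → Vec m

/-- the `i`-th standard basis vector of `ℝ^m`. -/
def bvec (m : ℕ) (i : Fin m) : Vec m := Pi.single i 1

/-- `μ` is a skew-symmetric bilinear map, i.e. an element of `V = Λ²(ℝ^m)* ⊗ ℝ^m`. -/
def IsSkewBil {m : ℕ} (μ : Bil m) : Prop :=
  (∀ Y, IsLinearMap ℝ fun X => μ X Y) ∧ (∀ X, IsLinearMap ℝ (μ X)) ∧ ∀ X Y, μ X Y = -μ Y X

/-- the Jacobi identity for `μ`. -/
def IsJacobi {m : ℕ} (μ : Bil m) : Prop :=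
  ∀ X Y Z, μ (μ X Y) Z + μ (μ Y Z) X + μ (μ Z X) Y = 0

/-- iterated left multiplications `μ(X (k-1), ⋯ μ(X 0, Y))`. -/
def adPow {m : ℕ} (μ : Bil m) (X : ℕ → Vec m) : ℕ → Vec m → Vec m
  | 0, Y => Y
  | k + 1, Y => μ (X k) (adPow μ X k Y)

/-- nilpotency of the bracket `μ`. -/
def IsNilpotentBil {m : ℕ} (μ : Bil m) : Prop :=
  ∃ k : ℕ, ∀ (X : ℕ → Vec m) (Y : Vec m), adPow μ X k Y = 0

/-- membership in the variety `N` of nilpotent Lie brackets on `ℝ^m`. -/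
def NilBracket {m : ℕ} (μ : Bil m) : Prop :=
  IsSkewBil μ ∧ IsJacobi μ ∧ IsNilpotentBil μ

/-- the `GL_m(ℝ)` action `(g.μ)(X,Y) = g μ(g⁻¹X, g⁻¹Y)` on `V`. -/
def mact {m : ℕ} (g : Matrix (Fin m) (Fin m) ℝ) (μ : Bil m) : Bil m :=
  fun X Y => g.mulVec (μ (g⁻¹.mulVec X) (g⁻¹.mulVec Y))

/-- `‖μ‖²` for the natural inner product on `V`. -/
def normSqV {m : ℕ} (μ : Bil m) : ℝ :=
  ∑ i, ∑ j, ∑ k, (μ (bvec m i) (bvec m j) k) ^ 2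

/-- the Ricci operator of `(N_μ, ⟨·,·⟩)`, as a matrix:
`⟨Ric_μ X, Y⟩ = -(1/2) Σ ⟨μ(X,Xᵢ),Xⱼ⟩⟨μ(Y,Xᵢ),Xⱼ⟩ + (1/4) Σ ⟨μ(Xᵢ,Xⱼ),X⟩⟨μ(Xᵢ,Xⱼ),Y⟩`. -/
def RicM {m : ℕ} (μ : Bil m) : Matrix (Fin m) (Fin m) ℝ :=
  Matrix.of fun x y =>
    -(1/2) * (∑ i, ∑ j, μ (bvec m x) (bvec m i) j * μ (bvec m y) (bvec m i) j)
    + (1/4) * (∑ i, ∑ j, μ (bvec m i) (bvec m j) x * μ (bvec m i) (bvec m j) y)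

/-- `D` is a derivation of the bracket `μ`. -/
def IsDerivation {m : ℕ} (μ : Bil m) (D : Matrix (Fin m) (Fin m) ℝ) : Prop :=
  ∀ X Y, D.mulVec (μ X Y) = μ (D.mulVec X) Y + μ X (D.mulVec Y)

/-- the matrix of `ad_μ X : Y ↦ μ(X,Y)`. -/
def adMat {m : ℕ} (μ : Bil m) (X : Vec m) : Matrix (Fin m) (Fin m) ℝ :=
  Matrix.of fun j i => μ X (bvec m i) j

/-- the moment-map value `M_μ = -4 Σᵢ (ad_μ Xᵢ)ᵗ(ad_μ Xᵢ) + 2 Σᵢ (ad_μ Xᵢ)(ad_μ Xᵢ)ᵗ`. -/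
def Mmat {m : ℕ} (μ : Bil m) : Matrix (Fin m) (Fin m) ℝ :=
  (-4 : ℝ) • (∑ i, (adMat μ (bvec m i))ᵀ * adMat μ (bvec m i))
    + (2 : ℝ) • (∑ i, adMat μ (bvec m i) * (adMat μ (bvec m i))ᵀ)

/-- the 2-form `ω(X,Y) = ⟨X, JY⟩`. -/
def sympForm {m : ℕ} (J : Matrix (Fin m) (Fin m) ℝ) (X Y : Vec m) : ℝ :=
  X ⬝ᵥ J.mulVec Y

/-- closedness of a 2-form `ω` with respect to the bracket `μ`:
`ω(μ(X,Y),Z) + ω(μ(Y,Z),X) + ω(μ(Z,X),Y) = 0`. -/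
def IsClosedForm {m : ℕ} (ω : Vec m → Vec m → ℝ) (μ : Bil m) : Prop :=
  ∀ X Y Z, ω (μ X Y) Z + ω (μ Y Z) X + ω (μ Z X) Y = 0

/-- membership in `Sp(n,ℝ)`: invertible and preserving `ω = ⟨·, J·⟩`. -/
def IsSymplMat {m : ℕ} (J g : Matrix (Fin m) (Fin m) ℝ) : Prop :=
  IsUnit g ∧ ∀ X Y, sympForm J (g.mulVec X) (g.mulVec Y) = sympForm J X Y

/-- membership in `GL(n,ℂ) = {g : gJ = Jg}`. -/
def IsCxMat {m : ℕ} (J g : Matrix (Fin m) (Fin m) ℝ) : Prop :=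
  IsUnit g ∧ g * J = J * g

/-- the anti-complexified Ricci operator `Ric^{ac} = (1/2)(Ric + J Ric J)`. -/
def Ricac {m : ℕ} (J : Matrix (Fin m) (Fin m) ℝ) (μ : Bil m) : Matrix (Fin m) (Fin m) ℝ :=
  (1/2 : ℝ) • (RicM μ + J * RicM μ * J)

/-- the complexified Ricci operator `Ric^{c} = (1/2)(Ric − J Ric J)`. -/
def Ricc {m : ℕ} (J : Matrix (Fin m) (Fin m) ℝ) (μ : Bil m) : Matrix (Fin m) (Fin m) ℝ :=
  (1/2 : ℝ) • (RicM μ - J * RicM μ * J)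

lemma vec_eq_sum {m : ℕ} (X : Vec m) : X = ∑ i, X i • bvec m i := by
  have : ∀ i : Fin m, X i • bvec m i = Pi.single i (X i) := by
    intro i
    rw [bvec, ← Pi.single_smul, smul_eq_mul, mul_one]
  rw [Finset.sum_congr rfl fun i _ => this i, Finset.univ_sum_single X]

lemma bil_expand_left {m : ℕ} (μ : Bil m) (hμ : IsSkewBil μ) (X Y : Vec m) (k : Fin m) :
    μ X Y k = ∑ i, X i * μ (bvec m i) Y k := by
  obtain ⟨h1, h2, h3⟩ := hμ
  let f : Vec m →ₗ[ℝ] Vec m := IsLinearMap.mk' _ (h1 Y)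
  have hf : ∀ Z, μ Z Y = f Z := fun _ => rfl
  conv_lhs => rw [hf, vec_eq_sum X, map_sum]
  rw [Finset.sum_apply]
  exact Finset.sum_congr rfl fun i _ => by
    rw [_root_.map_smul, Pi.smul_apply, smul_eq_mul, ← hf]

lemma bil_expand_right {m : ℕ} (μ : Bil m) (hμ : IsSkewBil μ) (X Y : Vec m) (k : Fin m) :
    μ X Y k = ∑ j, Y j * μ X (bvec m j) k := by
  obtain ⟨h1, h2, h3⟩ := hμ
  let f : Vec m →ₗ[ℝ] Vec m := IsLinearMap.mk' _ (h2 X)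
  have hf : ∀ Z, μ X Z = f Z := fun _ => rfl
  conv_lhs => rw [hf, vec_eq_sum Y, map_sum]
  rw [Finset.sum_apply]
  exact Finset.sum_congr rfl fun j _ => by
    rw [_root_.map_smul, Pi.smul_apply, smul_eq_mul, ← hf]

lemma mulVec_bvec {m : ℕ} (D : Matrix (Fin m) (Fin m) ℝ) (i p : Fin m) :
    D.mulVec (bvec m i) p = D p i := by
  simp [Matrix.mulVec, dotProduct, bvec, Pi.single_apply]

lemma bvec_expand_left {m : ℕ} (μ : Bil m) (hμ : IsSkewBil μ) (X : Vec m) (j k : Fin m) :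
    μ X (bvec m j) k = ∑ i, X i * μ (bvec m i) (bvec m j) k :=
  bil_expand_left μ hμ X (bvec m j) k

lemma deriv_coord {m : ℕ} (μ : Bil m) (hμ : IsSkewBil μ)
    (D : Matrix (Fin m) (Fin m) ℝ) (hD : IsDerivation μ D) (i j k : Fin m) :
    ∑ p, D k p * μ (bvec m i) (bvec m j) p
      = ∑ p, (D p i * μ (bvec m p) (bvec m j) k + D p j * μ (bvec m i) (bvec m p) k) := by
  have h := congrFun (hD (bvec m i) (bvec m j)) k
  have hL : D.mulVec (μ (bvec m i) (bvec m j)) k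
      = ∑ p, D k p * μ (bvec m i) (bvec m j) p := by
    simp [Matrix.mulVec, dotProduct]
  have hR1 : μ (D.mulVec (bvec m i)) (bvec m j) k
      = ∑ p, D p i * μ (bvec m p) (bvec m j) k := by
    rw [bil_expand_left μ hμ]
    exact Finset.sum_congr rfl fun p _ => by rw [mulVec_bvec]
  have hR2 : μ (bvec m i) (D.mulVec (bvec m j)) k
      = ∑ p, D p j * μ (bvec m i) (bvec m p) k := by
    rw [bil_expand_right μ hμ]
    exact Finset.sum_congr rfl fun p _ => by rw [mulVec_bvec]
  rw [← hL, h, Pi.add_apply, hR1, hR2, Finset.sum_add_distrib]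

lemma sum4_equiv {α : Type*} [Fintype α] (f g : α → α → α → α → ℝ)
    (σ : α × α × α × α ≃ α × α × α × α)
    (h : ∀ a b c d, f a b c d
        = g (σ (a,b,c,d)).1 (σ (a,b,c,d)).2.1 (σ (a,b,c,d)).2.2.1 (σ (a,b,c,d)).2.2.2) :
    (∑ a, ∑ b, ∑ c, ∑ d, f a b c d) = ∑ a, ∑ b, ∑ c, ∑ d, g a b c d := by
  have l1 : (∑ x : α × α × α × α, f x.1 x.2.1 x.2.2.1 x.2.2.2)
      = ∑ a, ∑ b, ∑ c, ∑ d, f a b c d := by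
    simp only [Fintype.sum_prod_type]
  have l2 : (∑ x : α × α × α × α, g x.1 x.2.1 x.2.2.1 x.2.2.2)
      = ∑ a, ∑ b, ∑ c, ∑ d, g a b c d := by
    simp only [Fintype.sum_prod_type]
  rw [← l1, ← l2]
  exact Fintype.sum_equiv σ _ _ (fun x => h x.1 x.2.1 x.2.2.1 x.2.2.2)

lemma trace_RicM_mul_deriv {m : ℕ} (μ : Bil m) (hμ : IsSkewBil μ)
    (D : Matrix (Fin m) (Fin m) ℝ) (hD : IsDerivation μ D) :
    Matrix.trace (RicM μ * D) = 0 := by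
  classical
  set c : Fin m → Fin m → Fin m → ℝ := fun i j k => μ (bvec m i) (bvec m j) k with hc
  have hsk : ∀ i j k, c i j k = - c j i k := by
    intro i j k
    show μ (bvec m i) (bvec m j) k = - μ (bvec m j) (bvec m i) k
    rw [hμ.2.2 (bvec m i) (bvec m j)]
    rfl
  set T1 : ℝ := ∑ k, ∑ p, ∑ i, ∑ j, D p k * (c k i j * c p i j) with hT1
  set T2 : ℝ := ∑ k, ∑ p, ∑ i, ∑ j, D p k * (c i j k * c i j p) with hT2
  -- the summed derivation identity
  have hS : (∑ i, ∑ j, ∑ k, ∑ p, c i j k * (D k p * c i j p))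
      = ∑ i, ∑ j, ∑ k, ∑ p, c i j k * (D p i * c p j k + D p j * c i p k) := by
    refine Finset.sum_congr rfl fun i _ => Finset.sum_congr rfl fun j _ =>
      Finset.sum_congr rfl fun k _ => ?_
    rw [← Finset.mul_sum, ← Finset.mul_sum, deriv_coord μ hμ D hD i j k]
  have hL : (∑ i, ∑ j, ∑ k, ∑ p, c i j k * (D k p * c i j p)) = T2 := by
    rw [hT2]
    exact sum4_equiv _ _ ⟨fun x => (x.2.2.2, x.2.2.1, x.1, x.2.1),
      fun x => (x.2.2.1, x.2.2.2, x.2.1, x.1), fun x => rfl, fun x => rfl⟩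
      (fun i j k p => by simp only [Equiv.coe_fn_mk]; ring)
  have hR1 : (∑ i, ∑ j, ∑ k, ∑ p, c i j k * (D p i * c p j k)) = T1 := by
    rw [hT1]
    exact sum4_equiv _ _ ⟨fun x => (x.1, x.2.2.2, x.2.1, x.2.2.1),
      fun x => (x.1, x.2.2.1, x.2.2.2, x.2.1), fun x => rfl, fun x => rfl⟩
      (fun i j k p => by simp only [Equiv.coe_fn_mk]; ring)
  have hR2 : (∑ i, ∑ j, ∑ k, ∑ p, c i j k * (D p j * c i p k)) = T1 := by
    rw [← hR1]
    exact sum4_equiv _ _ ⟨fun x => (x.2.1, x.1, x.2.2.1, x.2.2.2),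
      fun x => (x.2.1, x.1, x.2.2.1, x.2.2.2), fun x => rfl, fun x => rfl⟩
      (fun i j k p => by simp only [Equiv.coe_fn_mk]; rw [hsk i j k, hsk i p k]; ring)
  have key : T2 = 2 * T1 := by
    rw [← hL, hS]
    simp only [mul_add, Finset.sum_add_distrib]
    rw [hR1, hR2]; ring
  -- trace in terms of T1, T2
  have hmul : ∀ (f : Fin m → Fin m → ℝ) (d : ℝ),
      (∑ i, ∑ j, f i j) * d = ∑ i, ∑ j, d * f i j := by
    intro f d
    rw [Finset.sum_mul]
    exact Finset.sum_congr rfl fun i _ => by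
      rw [Finset.sum_mul]
      exact Finset.sum_congr rfl fun j _ => mul_comm _ _
  have hstep : ∀ k p : Fin m, RicM μ k p * D p k
      = -(1/2) * (∑ i, ∑ j, D p k * (c k i j * c p i j))
        + (1/4) * (∑ i, ∑ j, D p k * (c i j k * c i j p)) := by
    intro k p
    have : RicM μ k p = -(1/2) * (∑ i, ∑ j, c k i j * c p i j)
        + (1/4) * (∑ i, ∑ j, c i j k * c i j p) := rfl
    rw [this, add_mul, mul_assoc, mul_assoc, hmul, hmul]
  have htr : Matrix.trace (RicM μ * D) = ∑ k, ∑ p, RicM μ k p * D p k := by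
    simp [Matrix.trace, Matrix.diag, Matrix.mul_apply]
  rw [htr]
  calc (∑ k, ∑ p, RicM μ k p * D p k)
      = ∑ k, ∑ p, (-(1/2) * (∑ i, ∑ j, D p k * (c k i j * c p i j))
        + (1/4) * (∑ i, ∑ j, D p k * (c i j k * c i j p))) :=
        Finset.sum_congr rfl fun k _ => Finset.sum_congr rfl fun p _ => hstep k p
    _ = -(1/2) * T1 + (1/4) * T2 := by
        simp only [Finset.sum_add_distrib, ← Finset.mul_sum, hT1, hT2]
    _ = 0 := by rw [key]; ring

lemma trace_RicM {m : ℕ} (μ : Bil m) :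
    Matrix.trace (RicM μ) = -(1/4) * normSqV μ := by
  have h1 : (∑ x : Fin m, ∑ i, ∑ j, μ (bvec m x) (bvec m i) j * μ (bvec m x) (bvec m i) j)
      = normSqV μ := by
    rw [normSqV]
    exact Finset.sum_congr rfl fun x _ => Finset.sum_congr rfl fun i _ =>
      Finset.sum_congr rfl fun j _ => (sq _).symm
  have h2 : (∑ x : Fin m, ∑ i, ∑ j, μ (bvec m i) (bvec m j) x * μ (bvec m i) (bvec m j) x)
      = normSqV μ := by
    rw [normSqV, Finset.sum_comm]
    refine Finset.sum_congr rfl fun i _ => ?_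
    rw [Finset.sum_comm]
    exact Finset.sum_congr rfl fun j _ => Finset.sum_congr rfl fun x _ => (sq _).symm
  have : Matrix.trace (RicM μ)
      = -(1/2) * (∑ x : Fin m, ∑ i, ∑ j, μ (bvec m x) (bvec m i) j * μ (bvec m x) (bvec m i) j)
        + (1/4) * (∑ x : Fin m, ∑ i, ∑ j, μ (bvec m i) (bvec m j) x * μ (bvec m i) (bvec m j) x) := by
    rw [Matrix.trace]
    simp only [Matrix.diag, RicM, Matrix.of_apply, Finset.sum_add_distrib, ← Finset.mul_sum]
  rw [this, h1, h2]; ring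

lemma normSq_eq_zero {m : ℕ} (μ : Bil m) (hμ : IsSkewBil μ) (h : normSqV μ = 0) : μ = 0 := by
  have hc : ∀ i j k, μ (bvec m i) (bvec m j) k = 0 := by
    intro i j k
    rw [normSqV, Finset.sum_eq_zero_iff_of_nonneg (fun i _ => by positivity)] at h
    have h' := h i (Finset.mem_univ i)
    rw [Finset.sum_eq_zero_iff_of_nonneg (fun j _ => by positivity)] at h'
    have h'' := h' j (Finset.mem_univ j)
    rw [Finset.sum_eq_zero_iff_of_nonneg (fun k _ => by positivity)] at h''
    exact pow_eq_zero_iff (two_ne_zero) |>.mp (h'' k (Finset.mem_univ k))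
  funext X Y
  show μ X Y = 0
  funext k
  show μ X Y k = 0
  rw [bil_expand_left μ hμ]
  refine Finset.sum_eq_zero fun i _ => ?_
  have : μ (bvec m i) Y k = 0 := by
    rw [bil_expand_right μ hμ]
    exact Finset.sum_eq_zero fun j _ => by rw [hc i j k]; ring
  rw [this]; ring


/-- if `Ric^{ac}_μ = cI + D` with `D ∈ Der(μ)` then
`tr((Ric^{ac}_μ)²) = c·tr(Ric_μ) = −(1/4) c ‖μ‖²`, and if `μ ≠ 0` the soliton constant is
`c = tr((Ric^{ac}_μ)²)/tr(Ric_μ)`. -/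
theorem soliton_constant (n : ℕ) (hn : 1 ≤ n)
    (J : Matrix (Fin (2 * n)) (Fin (2 * n)) ℝ) (hJskew : Jᵀ = -J) (hJsq : J * J = -1)
    (μ : Bil (2 * n)) (hμ : NilBracket μ)
    (c : ℝ) (D : Matrix (Fin (2 * n)) (Fin (2 * n)) ℝ) (hD : IsDerivation μ D)
    (hsol : Ricac J μ = c • (1 : Matrix (Fin (2 * n)) (Fin (2 * n)) ℝ) + D) :
    Matrix.trace (Ricac J μ * Ricac J μ) = c * Matrix.trace (RicM μ) ∧
    Matrix.trace (Ricac J μ * Ricac J μ) = -(1/4) * c * normSqV μ ∧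
    (μ ≠ 0 → c = Matrix.trace (Ricac J μ * Ricac J μ) / Matrix.trace (RicM μ)) := by
  set R := RicM μ with hR
  have hDR : Matrix.trace (D * R) = 0 := by
    rw [Matrix.trace_mul_comm]
    exact trace_RicM_mul_deriv μ hμ.1 D hD
  have key2 : Matrix.trace ((J*R*J)*(J*R*J)) = Matrix.trace (R*R) := by
    have h1 : (J*R*J)*(J*R*J) = -(J*(R*R)*J) := by
      calc (J*R*J)*(J*R*J) = J*R*(J*J)*(R*J) := by noncomm_ring
        _ = J*R*(-1)*(R*J) := by rw [hJsq]
        _ = -(J*(R*R)*J) := by noncomm_ring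
    rw [h1, Matrix.trace_neg, Matrix.trace_mul_comm (J*(R*R)) J, ← Matrix.mul_assoc, hJsq,
      neg_one_mul, Matrix.trace_neg, neg_neg]
  have e1 : Matrix.trace ((J*R*J)*R) = Matrix.trace (R*(J*R*J)) := Matrix.trace_mul_comm _ _
  have hAA : Matrix.trace (Ricac J μ * Ricac J μ)
      = (1/4) * (Matrix.trace (R*R) + Matrix.trace (R*(J*R*J))
        + Matrix.trace ((J*R*J)*R) + Matrix.trace ((J*R*J)*(J*R*J))) := by
    rw [Ricac, ← hR]
    simp only [Matrix.smul_mul, Matrix.mul_smul, Matrix.add_mul, Matrix.mul_add,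
      Matrix.trace_smul, Matrix.trace_add, smul_eq_mul]
    ring
  have hAR : Matrix.trace (Ricac J μ * R)
      = (1/2) * (Matrix.trace (R*R) + Matrix.trace ((J*R*J)*R)) := by
    rw [Ricac, ← hR]
    simp only [Matrix.smul_mul, Matrix.add_mul, Matrix.trace_smul, Matrix.trace_add, smul_eq_mul]
  have hAAAR : Matrix.trace (Ricac J μ * Ricac J μ) = Matrix.trace (Ricac J μ * R) := by
    rw [hAA, hAR, key2, e1]; ring
  have hARc : Matrix.trace (Ricac J μ * R) = c * Matrix.trace R := by
    rw [hsol, Matrix.add_mul, Matrix.smul_mul, Matrix.one_mul, Matrix.trace_add,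
      Matrix.trace_smul, hDR, smul_eq_mul, add_zero]
  have part1 : Matrix.trace (Ricac J μ * Ricac J μ) = c * Matrix.trace (RicM μ) := by
    rw [hAAAR, hARc, hR]
  have htrR : Matrix.trace (RicM μ) = -(1/4) * normSqV μ := trace_RicM μ
  refine ⟨part1, by rw [part1, htrR]; ring, fun hne => ?_⟩
  have hnz : normSqV μ ≠ 0 := fun h0 => hne (normSq_eq_zero μ hμ.1 h0)
  have ht : Matrix.trace (RicM μ) ≠ 0 := by
    rw [htrR]; intro h; apply hnz; linarith
  rw [part1, mul_div_assoc, div_self ht, mul_one]
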